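/- Let B : X₀ → X₀ be a continuous linear operator on a real Banach space X₀ possessing a regular skeleton chain of length p: real Banach spaces X₀, X₁, …, X_p, continuous linear operators A_{2i} : X_{i−1} → X_i and A_{2i−1} : X_i → X_{i−1} (i = 1,…,p) with B = A₁ ∘ A₂, A_{2i} ∘ A_{2i−1} = A_{2i+1} ∘ A_{2i+2} for i = 1,…,p−1, and B^p := A_{2p} ∘ A_{2p−1} : X_p → X_p continuously invertible. Let M := A_{2p} ∘ A_{2p−2} ∘ ⋯ ∘ A₂ : X₀ → X_p. If f : ℝ → X₀ is p times differentiable, then for every c₀ ∈ X_p there exists a unique differentiable x : ℝ → X₀ satisfying B(x'(t)) = x(t) + f(t) for all t and M(x(0)) = c₀. -/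

import Mathlib

open ContinuousLinearMap

/-- The composition `M_k = A_{2k} ∘ A_{2(k-1)} ∘ ⋯ ∘ A₂ : X₀ → X_k` built from the
forward operators `Af k = A_{2(k+1)} : X_k → X_{k+1}` of a skeleton chain. -/
noncomputable def chainComp {X : ℕ → Type*} [∀ n, NormedAddCommGroup (X n)]
    [∀ n, NormedSpace ℝ (X n)] (Af : ∀ k : ℕ, X k →L[ℝ] X (k + 1)) :
    ∀ k : ℕ, X 0 →L[ℝ] X k
  | 0 => ContinuousLinearMap.id ℝ (X 0)
  | (k + 1) => (Af k).comp (chainComp Af k)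

noncomputable def chainCompB {X : ℕ → Type*} [∀ n, NormedAddCommGroup (X n)]
    [∀ n, NormedSpace ℝ (X n)] (Ab : ∀ k : ℕ, X (k + 1) →L[ℝ] X k) :
    ∀ k : ℕ, X k →L[ℝ] X 0
  | 0 => ContinuousLinearMap.id ℝ (X 0)
  | (k + 1) => (chainCompB Ab k).comp (Ab k)

/-- `a ∘ (b∘a)^n ∘ b = (a∘b)^(n+1)` pointwise. -/
lemma conj_pow_apply {E F : Type*} [NormedAddCommGroup E] [NormedSpace ℝ E]
    [NormedAddCommGroup F] [NormedSpace ℝ F] (a : E →L[ℝ] F) (b : F →L[ℝ] E) :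
    ∀ n, ∀ v : F, a ((((b.comp a)) ^ n) (b v)) = ((a.comp b) ^ (n + 1)) v := by
  intro n
  induction n with
  | zero => intro v; simp
  | succ n ih =>
    intro v
    have h1 : ((b.comp a) ^ (n + 1)) (b v)
        = ((b.comp a) ^ n) (b ((a.comp b) v)) := by
      rw [pow_succ]
      simp [ContinuousLinearMap.mul_apply]
    rw [h1, ih ((a.comp b) v)]
    rw [pow_succ (a.comp b) (n+1)]
    simp [ContinuousLinearMap.mul_apply]

section Aux
variable {X : ℕ → Type*} [∀ n, NormedAddCommGroup (X n)] [∀ n, NormedSpace ℝ (X n)]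
variable {Af : ∀ k : ℕ, X k →L[ℝ] X (k + 1)} {Ab : ∀ k : ℕ, X (k + 1) →L[ℝ] X k} {q : ℕ}
variable (hch : ∀ k : ℕ, k < q → (Af k).comp (Ab k) = (Ab (k + 1)).comp (Af (k + 1)))
include hch

/-- `M_k ∘ B = A_{2k+1} ∘ M_{k+1}` pointwise. -/
lemma chain_L2 : ∀ k, k ≤ q → ∀ v : X 0,
    chainComp Af k ((Ab 0) ((Af 0) v)) = (Ab k) (chainComp Af (k + 1) v) := by
  intro k
  induction k with
  | zero => intro _ v; simp [chainComp]
  | succ k ih =>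
    intro hk v
    have hk' : k < q := hk
    have h1 := DFunLike.congr_fun (hch k hk') (chainComp Af (k + 1) v)
    simp only [ContinuousLinearMap.comp_apply] at h1
    simp only [chainComp, ContinuousLinearMap.comp_apply]
    rw [ih (Nat.le_of_succ_le hk) v, h1]
    rfl

/-- `B ∘ N_{k+1} = N_{k+1} ∘ (A_{2(k+1)} ∘ A_{2k+1})` pointwise. -/
lemma chain_L3 : ∀ k, k ≤ q → ∀ v : X (k + 1),
    (Ab 0) ((Af 0) (chainCompB Ab (k + 1) v))
      = chainCompB Ab (k + 1) ((Af k) ((Ab k) v)) := by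
  intro k
  induction k with
  | zero => intro _ v; simp [chainCompB]
  | succ k ih =>
    intro hk v
    have hk' : k < q := hk
    have h1 := DFunLike.congr_fun (hch k hk') ((Ab (k+1)) v)
    simp only [ContinuousLinearMap.comp_apply] at h1
    show (Ab 0) ((Af 0) ((chainCompB Ab (k+1)) ((Ab (k+1)) v)))
        = (chainCompB Ab (k+1)) ((Ab (k+1)) ((Af (k+1)) ((Ab (k+1)) v)))
    rw [ih (Nat.le_of_succ_le hk) ((Ab (k+1)) v), h1]

/-- `B^(k+1) = N_{k+1} ∘ M_{k+1}` pointwise. -/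
lemma chain_L6 : ∀ k, k ≤ q → ∀ v : X 0,
    ((((Ab 0).comp (Af 0)) ^ (k + 1)) v)
      = chainCompB Ab (k + 1) (chainComp Af (k + 1) v) := by
  intro k
  induction k with
  | zero => intro _ v; simp [chainComp, chainCompB]
  | succ k ih =>
    intro hk v
    have hk' : k < q := hk
    have h1 := DFunLike.congr_fun (hch k hk') (chainComp Af (k+1) v)
    simp only [ContinuousLinearMap.comp_apply] at h1
    rw [pow_succ']
    simp only [ContinuousLinearMap.mul_apply, ContinuousLinearMap.comp_apply]
    rw [ih (Nat.le_of_succ_le hk) v]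
    have h2 := chain_L3 hch k (Nat.le_of_succ_le hk) (chainComp Af (k+1) v)
    rw [h2, h1]
    rfl

/-- `M_{k+1} ∘ N_{k+1} = (A_{2(k+1)} ∘ A_{2k+1})^(k+1)` pointwise. -/
lemma chain_L4 : ∀ k, k ≤ q → ∀ v : X (k + 1),
    chainComp Af (k + 1) (chainCompB Ab (k + 1) v)
      = (((Af k).comp (Ab k)) ^ (k + 1)) v := by
  intro k
  induction k with
  | zero => intro _ v; simp [chainComp, chainCompB]
  | succ k ih =>
    intro hk v
    have hk' : k < q := hk
    show (Af (k+1)) ((chainComp Af (k+1)) ((chainCompB Ab (k+1)) ((Ab (k+1)) v)))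
        = (((Af (k+1)).comp (Ab (k+1))) ^ (k + 1 + 1)) v
    rw [ih (Nat.le_of_succ_le hk) ((Ab (k+1)) v)]
    rw [hch k hk']
    exact conj_pow_apply (Af (k+1)) (Ab (k+1)) (k+1) v

end Aux


set_option maxHeartbeats 1000000 in
set_option synthInstance.maxHeartbeats 400000 in
/-- if `B` has a regular skeleton chain of length `p = q + 1 ≥ 1`
(`B = A₁ ∘ A₂`, `A_{2i} ∘ A_{2i-1} = A_{2i+1} ∘ A_{2i+2}`,
`B^p = A_{2p} ∘ A_{2p-1}` continuously invertible) and `f` is `p` times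
differentiable, then the equation `B x' = x + f` with the structure-regularized
initial condition `M x(0) = c₀`, `M = A_{2p} ∘ ⋯ ∘ A₂`, has a unique
differentiable solution for every `c₀ ∈ X_p`.
Here `Af k = A_{2(k+1)} : X_k → X_{k+1}` and `Ab k = A_{2k+1} : X_{k+1} → X_k`. -/
theorem stmt4
    {X : ℕ → Type*} [∀ n, NormedAddCommGroup (X n)] [∀ n, NormedSpace ℝ (X n)]
    [∀ n, CompleteSpace (X n)]
    (p q : ℕ) (hp : p = q + 1)
    (Af : ∀ k : ℕ, X k →L[ℝ] X (k + 1)) (Ab : ∀ k : ℕ, X (k + 1) →L[ℝ] X k)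
    (B : X 0 →L[ℝ] X 0) (hB : B = (Ab 0).comp (Af 0))
    (hchain : ∀ k : ℕ, k + 1 < p → (Af k).comp (Ab k) = (Ab (k + 1)).comp (Af (k + 1)))
    (hreg : IsUnit ((Af q).comp (Ab q) : X (q + 1) →L[ℝ] X (q + 1)))
    (f : ℝ → X 0) (hf : ∀ k < p, Differentiable ℝ (iteratedDeriv k f))
    (c₀ : X p) :
    ∃! x : ℝ → X 0, Differentiable ℝ x ∧
      (∀ t : ℝ, B (deriv x t) = x t + f t) ∧
      chainComp Af p (x 0) = c₀ := by
  subst hp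
  have hch : ∀ k : ℕ, k < q → (Af k).comp (Ab k) = (Ab (k + 1)).comp (Af (k + 1)) :=
    fun k hk => hchain k (by omega)
  set Bp : X (q+1) →L[ℝ] X (q+1) := (Af q).comp (Ab q) with hBpdef
  set M : X 0 →L[ℝ] X (q+1) := chainComp Af (q+1) with hMdef
  set N : X (q+1) →L[ℝ] X 0 := chainCompB Ab (q+1) with hNdef
  set S : X (q+1) →L[ℝ] X (q+1) := (↑hreg.unit⁻¹ : X (q+1) →L[ℝ] X (q+1)) with hSdef
  -- basic algebra
  have hBSone : Bp * S = 1 := hreg.mul_val_inv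
  have hSBone : S * Bp = 1 := hreg.val_inv_mul
  have hBS : ∀ v, Bp (S v) = v := by
    intro v
    have := DFunLike.congr_fun hBSone v
    simpa [ContinuousLinearMap.mul_apply] using this
  have hSB : ∀ v, S (Bp v) = v := by
    intro v
    have := DFunLike.congr_fun hSBone v
    simpa [ContinuousLinearMap.mul_apply] using this
  have hcommBS : Commute Bp S := by
    unfold Commute SemiconjBy; rw [hBSone, hSBone]
  have hpowBS : ∀ v, (Bp ^ (q+1)) ((S ^ (q+1)) v) = v := by
    intro v
    have h1 : Bp ^ (q+1) * S ^ (q+1) = 1 := by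
      rw [← hcommBS.mul_pow, hBSone, one_pow]
    have := DFunLike.congr_fun h1 v
    simpa [ContinuousLinearMap.mul_apply] using this
  -- intertwining relations
  have hMB : ∀ v : X 0, M (B v) = Bp (M v) := by
    intro v
    rw [hB]
    have h1 := chain_L2 hch q le_rfl v
    show (Af q) (chainComp Af q (((Ab 0).comp (Af 0)) v)) = Bp (M v)
    simp only [ContinuousLinearMap.comp_apply]
    rw [h1]
    rfl
  have hBN : ∀ v : X (q+1), B (N v) = N (Bp v) := by
    intro v
    rw [hB]
    have := chain_L3 hch q le_rfl v
    exact this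
  have hpowNM : ∀ v : X 0, (B ^ (q+1)) v = N (M v) := by
    intro v
    rw [hB]
    exact chain_L6 hch q le_rfl v
  have hMN : ∀ v : X (q+1), M (N v) = (Bp ^ (q+1)) v := by
    intro v
    exact chain_L4 hch q le_rfl v
  -- the exponential
  set E : ℝ → (X (q+1) →L[ℝ] X (q+1)) := fun t => NormedSpace.exp (t • S) with hEdef
  have hEadd : ∀ a b : ℝ, E a * E b = E (a + b) := by
    intro a b
    have hc : Commute (a • S) (b • S) := ((Commute.refl S).smul_left a).smul_right b
    rw [hEdef]
    simp only
    letI : NormedAlgebra ℚ (X (q+1) →L[ℝ] X (q+1)) := NormedAlgebra.restrictScalars ℚ ℝ _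
    rw [add_smul, NormedSpace.exp_add_of_commute hc]
  have hE0 : E 0 = 1 := by
    rw [hEdef]; simp only [zero_smul]; exact NormedSpace.exp_zero
  have hEcancel : ∀ (t : ℝ) (v : X (q+1)), E t (E (-t) v) = v := by
    intro t v
    have h1 := hEadd t (-t)
    rw [add_neg_cancel, hE0] at h1
    have := DFunLike.congr_fun h1 v
    simpa [ContinuousLinearMap.mul_apply] using this
  have hSE : ∀ t : ℝ, S * E t = E t * S := by
    intro t
    have h : Commute S (NormedSpace.exp (t • S)) :=
      Commute.exp_right ((Commute.refl S).smul_right t)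
    exact h.eq
  have hEderiv : ∀ t : ℝ, HasDerivAt E (E t * S) t := fun t =>
    hasDerivAt_exp_smul_const S t
  have hEnegderiv : ∀ t : ℝ, HasDerivAt (fun s : ℝ => E (-s)) (-(E (-t) * S)) t := by
    intro t
    have h := (hasDerivAt_exp_smul_const S (-t)).scomp t ((hasDerivAt_id t).neg)
    rw [hEdef]
    simpa [Function.comp_def, neg_smul, neg_one_smul] using h
  -- data from f
  have hfq : Differentiable ℝ (iteratedDeriv q f) := hf q (by omega)
  set F : ℝ → X 0 := fun t => ∑ k ∈ Finset.range (q+1), (B ^ k) (iteratedDeriv k f t)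
    with hFdef
  have hFd : ∀ t, HasDerivAt F
      (∑ k ∈ Finset.range (q+1), (B ^ k) (iteratedDeriv (k+1) f t)) t := by
    intro t
    apply HasDerivAt.fun_sum
    intro k hk
    have hk' : k < q + 1 := Finset.mem_range.mp hk
    have hd : HasDerivAt (iteratedDeriv k f) (iteratedDeriv (k+1) f t) t := by
      rw [iteratedDeriv_succ]
      exact (hf k hk' t).hasDerivAt
    simpa only [Function.comp_def] using ((B ^ k).hasFDerivAt).comp_hasDerivAt t hd
  -- the solution of the regular problem on X_p
  set cVal : X (q+1) := (S ^ (q+1)) (c₀ + M (F 0)) with hcValdef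
  set w0 : X (q+1) := Bp cVal - M (iteratedDeriv q f 0) with hw0def
  set φ : ℝ → X (q+1) := fun s => E (-s) (S (M (iteratedDeriv q f s))) with hφdef
  have hφc : Continuous φ := by
    have h1 : Continuous fun s : ℝ => E (-s) := by
      letI : NormedAlgebra ℚ (X (q+1) →L[ℝ] X (q+1)) := NormedAlgebra.restrictScalars ℚ ℝ _
      exact NormedSpace.exp_continuous.comp (continuous_neg.smul continuous_const)
    exact h1.clm_apply (((S.comp M).continuous).comp hfq.continuous)
  set w : ℝ → X (q+1) := fun t => E t (w0 + ∫ s in (0:ℝ)..t, φ s) with hwdef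
  have hwd : ∀ t, HasDerivAt w (S (w t) + S (M (iteratedDeriv q f t))) t := by
    intro t
    have h2 : HasDerivAt (fun t : ℝ => w0 + ∫ s in (0:ℝ)..t, φ s) (φ t) t :=
      HasDerivAt.const_add w0 ((hφc.integral_hasStrictDerivAt 0 t).hasDerivAt)
    have h3 := (hEderiv t).clm_apply h2
    have e1 : (E t * S) (w0 + ∫ s in (0:ℝ)..t, φ s) = S (w t) := by
      rw [← hSE t]; rfl
    have e2 : E t (φ t) = S (M (iteratedDeriv q f t)) := hEcancel t _
    rw [e1, e2] at h3
    exact h3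
  set g : ℝ → X (q+1) := fun t => S (w t) + S (M (iteratedDeriv q f t)) with hgdef
  have hgd : ∀ t, HasDerivAt g
      (S (g t) + S (M (deriv (iteratedDeriv q f) t))) t := by
    intro t
    have h1 : HasDerivAt (fun t => S (w t)) (S (g t)) t := by
      simpa only [Function.comp_def] using (S.hasFDerivAt).comp_hasDerivAt t (hwd t)
    have h2 : HasDerivAt (fun t => S (M (iteratedDeriv q f t)))
        (S (M (deriv (iteratedDeriv q f) t))) t := by
      simpa only [Function.comp_def, ContinuousLinearMap.comp_apply] using
        ((S.comp M).hasFDerivAt).comp_hasDerivAt t (hfq t).hasDerivAt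
    exact h1.add h2
  set x : ℝ → X 0 := fun t => N (g t) - F t with hxdef
  have hxd : ∀ t, HasDerivAt x
      (N (S (g t) + S (M (deriv (iteratedDeriv q f) t)))
        - (∑ k ∈ Finset.range (q+1), (B ^ k) (iteratedDeriv (k+1) f t))) t := by
    intro t
    have h1 : HasDerivAt (fun t => N (g t))
        (N (S (g t) + S (M (deriv (iteratedDeriv q f) t)))) t := by
      simpa only [Function.comp_def] using (N.hasFDerivAt).comp_hasDerivAt t (hgd t)
    exact h1.sub (hFd t)
  have hxdiff : Differentiable ℝ x := fun t => (hxd t).differentiableAt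
  have hxeq : ∀ t, B (deriv x t) = x t + f t := by
    intro t
    rw [(hxd t).deriv, map_sub]
    have e1 : B (N (S (g t) + S (M (deriv (iteratedDeriv q f) t))))
        = N (g t) + N (M (deriv (iteratedDeriv q f) t)) := by
      rw [hBN, map_add, hBS, hBS, map_add]
    have e3 : ∀ k : ℕ, B ((B ^ k) (iteratedDeriv (k+1) f t))
        = (B ^ (k+1)) (iteratedDeriv (k+1) f t) := by
      intro k
      rw [pow_succ']
      rfl
    have e2 : B (∑ k ∈ Finset.range (q+1), (B ^ k) (iteratedDeriv (k+1) f t))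
        = F t + N (M (deriv (iteratedDeriv q f) t)) - f t := by
      rw [map_sum]
      simp only [e3]
      have e4 : (∑ k ∈ Finset.range (q+1), (B ^ (k+1)) (iteratedDeriv (k+1) f t))
          = (∑ k ∈ Finset.range (q+2), (B ^ k) (iteratedDeriv k f t))
            - (B ^ 0) (iteratedDeriv 0 f t) := by
        rw [Finset.sum_range_succ' (fun k => (B ^ k) (iteratedDeriv k f t)) (q+1)]
        abel
      rw [e4, Finset.sum_range_succ]
      have e5 : (B ^ (q+1)) (iteratedDeriv (q+1) f t)
          = N (M (deriv (iteratedDeriv q f) t)) := by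
        rw [hpowNM, iteratedDeriv_succ]
      have e6 : (B ^ 0) (iteratedDeriv 0 f t) = f t := by
        simp [iteratedDeriv_zero]
      rw [e5, e6]
    rw [e1, e2]
    show _ = N (g t) - F t + f t
    abel
  have hx0 : M (x 0) = c₀ := by
    have hw00 : w 0 = w0 := by
      show E 0 (w0 + ∫ s in (0:ℝ)..(0:ℝ), φ s) = w0
      rw [intervalIntegral.integral_same, add_zero, hE0]
      rfl
    have hg0 : g 0 = cVal := by
      show S (w 0) + S (M (iteratedDeriv q f 0)) = cVal
      rw [hw00, ← map_add]
      show S (Bp cVal - M (iteratedDeriv q f 0) + M (iteratedDeriv q f 0)) = cVal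
      rw [sub_add_cancel, hSB]
    show M (N (g 0) - F 0) = c₀
    rw [map_sub, hg0, hMN]
    show (Bp ^ (q+1)) ((S ^ (q+1)) (c₀ + M (F 0))) - M (F 0) = c₀
    rw [hpowBS, add_sub_cancel_right]
  refine ⟨x, ⟨hxdiff, hxeq, hx0⟩, ?_⟩
  -- uniqueness
  rintro y ⟨hyd, hyeq, hy0⟩
  set u : ℝ → X 0 := fun t => y t - x t with hudef
  have hud : Differentiable ℝ u := hyd.sub hxdiff
  have huB : ∀ t, B (deriv u t) = u t := by
    intro t
    have : deriv u t = deriv y t - deriv x t := deriv_sub (hyd t) (hxdiff t)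
    rw [this, map_sub, hyeq, hxeq]
    show _ = y t - x t
    abel
  have hu0 : M (u 0) = 0 := by
    show M (y 0 - x 0) = 0
    rw [map_sub, hy0, hx0, sub_self]
  set Y : ℝ → X (q+1) := fun t => M (u t) with hYdef
  have hYd : ∀ t, HasDerivAt Y (S (Y t)) t := by
    intro t
    have h1 : HasDerivAt Y (M (deriv u t)) t := by
      simpa only [Function.comp_def] using (M.hasFDerivAt).comp_hasDerivAt t (hud t).hasDerivAt
    have h3 : Bp (M (deriv u t)) = Y t := by
      rw [← hMB, huB]
    have h2 : M (deriv u t) = S (Y t) := by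
      rw [← h3, hSB]
    rwa [h2] at h1
  have hYzero : ∀ t, Y t = 0 := by
    have hconst : ∀ a b : ℝ, E (-a) (Y a) = E (-b) (Y b) := by
      apply is_const_of_deriv_eq_zero
      · intro t
        exact ((hEnegderiv t).clm_apply (hYd t)).differentiableAt
      · intro t
        have hd := (hEnegderiv t).clm_apply (hYd t)
        have hz : (-(E (-t) * S)) (Y t) + E (-t) (S (Y t)) = 0 := by
          simp [ContinuousLinearMap.neg_apply, ContinuousLinearMap.mul_apply]
        rw [hd.deriv, hz]
    intro t
    have h1 := hconst t 0
    have h2 : Y 0 = 0 := hu0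
    rw [h2, map_zero] at h1
    have h5 := hEcancel t (Y t)
    rw [h1, map_zero] at h5
    exact h5.symm
  have hdown : ∀ d : ℕ, ∀ t, chainComp Af (q + 1 - d) (u t) = 0 := by
    intro d
    induction d with
    | zero => simpa using hYzero
    | succ d ih =>
      by_cases hd : d ≤ q
      · have e1 : q + 1 - d = (q - d) + 1 := by omega
        rw [e1] at ih
        have e2 : q + 1 - (d + 1) = q - d := by omega
        rw [e2]
        intro t
        have hzero : chainComp Af (q - d + 1) (deriv u t) = 0 := by
          have hcomp : HasDerivAt (fun s => chainComp Af (q - d + 1) (u s))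
              (chainComp Af (q - d + 1) (deriv u t)) t := by
            simpa only [Function.comp_def] using
              ((chainComp Af (q - d + 1)).hasFDerivAt).comp_hasDerivAt t
                (hud t).hasDerivAt
          have hfun : (fun s => chainComp Af (q - d + 1) (u s)) = fun _ => (0 : X (q - d + 1)) :=
            funext ih
          have hzero' : HasDerivAt (fun s : ℝ => chainComp Af (q - d + 1) (u s)) 0 t := by
            rw [hfun]; exact hasDerivAt_const t 0
          exact hcomp.unique hzero'
        have h6 : chainComp Af (q - d) (u t) = chainComp Af (q - d) (B (deriv u t)) := by
          rw [huB]
        rw [h6, hB]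
        have h7 := chain_L2 hch (q - d) (by omega) (deriv u t)
        simp only [ContinuousLinearMap.comp_apply]
        rw [h7, hzero, map_zero]
      · have e1 : q + 1 - d = 0 := by omega
        have e2 : q + 1 - (d + 1) = 0 := by omega
        rw [e2]
        rw [e1] at ih
        exact ih
  have huz : ∀ t, u t = 0 := by
    intro t
    have h := hdown (q+1) t
    have e : q + 1 - (q + 1) = 0 := by omega
    rw [e] at h
    simpa [chainComp] using h
  funext t
  exact sub_eq_zero.mp (huz t)
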